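/- Let 0 < a < 1. Suppose w : (0,1] → ℝ is continuous, differentiable on (0,1), satisfies 0 ≤ w(x) ≤ 1 for all x ∈ (0,1], solves √(Δ_a(w(x)))·w'(x) = −(1−w(x)²)/x on (0,1), and w(1) = 0. Then w(y)² ≤ 1 − y^{2/√(1−a²)} for all y ∈ (0,1]. -/

import Mathlib

open Filter Set

/-- For `0 < a < 1`, a solution of the uniformization ODE with `0 ≤ w ≤ 1` and `w 1 = 0`
satisfies `w(y)² ≤ 1 - y^(2/√(1-a²))` on `(0,1]`. -/
theorem stmt_2 (a : ℝ) (ha0 : 0 < a) (ha1 : a < 1) (w : ℝ → ℝ)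
    (hcont : ContinuousOn w (Set.Ioc (0:ℝ) 1))
    (hdiff : ∀ x ∈ Set.Ioo (0:ℝ) 1, DifferentiableAt ℝ w x)
    (hbound : ∀ x ∈ Set.Ioc (0:ℝ) 1, 0 ≤ w x ∧ w x ≤ 1)
    (hode : ∀ x ∈ Set.Ioo (0:ℝ) 1,
      Real.sqrt ((1 - a^2) * (w x)^2 + a^2) * deriv w x = -(1 - (w x)^2) / x)
    (hw1 : w 1 = 0) :
    ∀ y ∈ Set.Ioc (0:ℝ) 1, (w y)^2 ≤ 1 - y ^ (2 / Real.sqrt (1 - a^2)) := by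
  intro y hy
  set b := Real.sqrt (1 - a ^ 2) with hbdef
  have hb2 : (0:ℝ) < 1 - a ^ 2 := by nlinarith
  have hb : 0 < b := Real.sqrt_pos.mpr hb2
  have hbsq : b ^ 2 = 1 - a ^ 2 := Real.sq_sqrt hb2.le
  set c : ℝ := -(2 / b) with hcdef
  set g : ℝ → ℝ := fun x => (1 - w x ^ 2) * x ^ c with hgdef
  -- derivative of g
  have key : ∀ x ∈ Set.Ioo (0:ℝ) 1, HasDerivAt g
      ((-(2 * w x * deriv w x)) * x ^ c + (1 - w x ^ 2) * (c * x ^ (c - 1))) x := by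
    intro x hx
    have h1 : HasDerivAt (fun t => 1 - w t ^ 2) (-(2 * w x * deriv w x)) x := by
      have hp := (hdiff x hx).hasDerivAt.pow 2
      have h2 := (hasDerivAt_const x (1:ℝ)).sub hp
      exact h2.congr_deriv (by norm_num)
    have h3 : HasDerivAt (fun t : ℝ => t ^ c) (c * x ^ (c - 1)) x :=
      Real.hasDerivAt_rpow_const (Or.inl (ne_of_gt hx.1))
    exact h1.mul h3
  have hderiv_nonpos : ∀ x ∈ Set.Ioo (0:ℝ) 1, deriv g x ≤ 0 := by
    intro x hx
    have hxpos : (0:ℝ) < x := hx.1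
    have hwx := hbound x ⟨hx.1, hx.2.le⟩
    set S := Real.sqrt ((1 - a ^ 2) * (w x) ^ 2 + a ^ 2) with hSdef
    have hSarg : (0:ℝ) < (1 - a ^ 2) * (w x) ^ 2 + a ^ 2 := by nlinarith [sq_nonneg (w x)]
    have hSpos : 0 < S := Real.sqrt_pos.mpr hSarg
    have hSsq : S ^ 2 = (1 - a ^ 2) * (w x) ^ 2 + a ^ 2 := Real.sq_sqrt hSarg.le
    have hode' := hode x hx
    have hw' : deriv w x = -(1 - (w x) ^ 2) / x / S := by
      rw [eq_div_iff hSpos.ne']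
      linear_combination hode'
    have hQ : 0 ≤ 1 - w x ^ 2 := by nlinarith [hwx.1, hwx.2]
    have hP : 0 < x ^ (c - 1) := Real.rpow_pos_of_pos hxpos _
    have hxc : x ^ c = x ^ (c - 1) * x := by
      rw [← Real.rpow_add_one hxpos.ne' (c - 1)]; norm_num
    have hbw : b * w x ≤ S := by
      have h1 : 0 ≤ b * w x := mul_nonneg hb.le hwx.1
      nlinarith [hSsq, hbsq, hSpos, sq_nonneg (w x)]
    rw [(key x hx).deriv, hw', hxc, hcdef]
    have key2 : -(2 * w x * (-(1 - w x ^ 2) / x / S)) * (x ^ (c - 1) * x)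
        + (1 - w x ^ 2) * (-(2 / b) * x ^ (c - 1))
        = (2 * (1 - w x ^ 2) * x ^ (c - 1) / (S * b)) * (b * w x - S) := by
      field_simp
      ring
    rw [key2]
    apply mul_nonpos_of_nonneg_of_nonpos
    · positivity
    · linarith
  have hg_cont : ContinuousOn g (Set.Ioc (0:ℝ) 1) := by
    apply ContinuousOn.mul
    · exact continuousOn_const.sub (hcont.pow 2)
    · exact ContinuousOn.rpow_const continuousOn_id (fun x hx => Or.inl (ne_of_gt hx.1))
  have hanti : AntitoneOn g (Set.Ioc (0:ℝ) 1) := by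
    apply antitoneOn_of_deriv_nonpos (convex_Ioc 0 1) hg_cont
    · rw [interior_Ioc]
      intro x hx
      exact ((key x hx).differentiableAt).differentiableWithinAt
    · rw [interior_Ioc]
      intro x hx
      exact hderiv_nonpos x hx
  have h1mem : (1:ℝ) ∈ Set.Ioc (0:ℝ) 1 := by norm_num
  have hgy : g 1 ≤ g y := hanti hy h1mem hy.2
  have hg1 : g 1 = 1 := by simp [hgdef, hw1]
  rw [hg1] at hgy
  -- g y = (1 - w y ^ 2) * y ^ (-(2/b)) ≥ 1
  have hyc : y ^ c = (y ^ (2 / b))⁻¹ := by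
    rw [hcdef, Real.rpow_neg hy.1.le]
  have hypos : 0 < y ^ (2 / b) := Real.rpow_pos_of_pos hy.1 _
  have : y ^ (2 / b) ≤ 1 - w y ^ 2 := by
    have h := hgy
    rw [hgdef] at h
    simp only at h
    rw [hyc] at h
    have h2 : 1 ≤ (1 - w y ^ 2) / y ^ (2 / b) := by rw [div_eq_mul_inv]; exact h
    have h3 := (le_div_iff₀ hypos).mp h2
    linarith
  linarith
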